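/- Let h : Δ → Δ be holomorphic with h(0) = 0, let λ = |h'(0)| > 0, and suppose r > 0 satisfies -r ∉ h(Δ). If g = φ_r ∘ h where φ_r(ζ) = (ζ + r)/(1 + rζ), then |g'(0)| = (1 - r²)λ and g(0) = r, and moreover λr - 2√r + λ ≤ 0 (equivalently (1+r)λ/(2√r) ≤ 1). -/

import Mathlib

open Metric Set
open scoped NNReal ENNReal

lemma my_exists_primitive {f : ℂ → ℂ} {ρ : ℝ≥0} (hρ : 0 < ρ)
    (hf : DifferentiableOn ℂ f (Metric.closedBall 0 ρ)) :
    ∃ F : ℂ → ℂ, F 0 = 0 ∧ ∀ z ∈ Metric.ball (0:ℂ) ρ, HasDerivAt F (f z) z := by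
  have hp := hf.hasFPowerSeriesOnBall hρ
  set p := cauchyPowerSeries f 0 ρ with hpdef
  refine ⟨fun z => ∑' n, p.coeff n / (n+1) * z^(n+1), by simp, fun z hz => ?_⟩
  have hz' : ‖z‖ < (ρ : ℝ) := by simpa using hz
  obtain ⟨t, ht1, ht2⟩ := exists_between hz'
  have ht0 : 0 ≤ t := (norm_nonneg z).trans ht1.le
  set r' : ℝ≥0 := ⟨t, ht0⟩ with hr'
  have hrad : (r' : ℝ≥0∞) < p.radius := by
    refine lt_of_lt_of_le ?_ hp.r_le
    exact_mod_cast ht2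
  have hu : Summable fun n => ‖p n‖ * (r' : ℝ) ^ n := p.summable_norm_mul_pow hrad
  have hD := hasDerivAt_tsum_of_isPreconnected hu (isOpen_ball (x := (0:ℂ)) (ε := (t:ℝ)))
    (convex_ball _ _).isPreconnected
    (g := fun n z => p.coeff n / (n+1) * z^(n+1))
    (g' := fun n y => p.coeff n * y^n)
    (fun n y _ => ?_) (fun n y hy => ?_) (Metric.mem_ball_self (ht0.lt_of_ne ?_))
    (by
      have he : (fun n : ℕ => p.coeff n / (n+1) * (0:ℂ)^(n+1)) = fun _ => 0 := by
        funext n; simp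
      rw [he]; exact summable_zero) (by simpa using ht1)
  · -- conclude
    have hmem : z ∈ Metric.eball (0:ℂ) ρ := by
      rw [Metric.emetric_ball_nnreal]; exact hz
    have hsum := hp.hasSum hmem
    simp only [FormalMultilinearSeries.apply_eq_pow_smul_coeff, smul_eq_mul, zero_add] at hsum
    have : (∑' n, p.coeff n * z ^ n) = f z := by
      rw [← hsum.tsum_eq]; exact tsum_congr fun n => mul_comm _ _
    rwa [this] at hD
  · -- HasDerivAt
    have h1 := (hasDerivAt_pow (n+1) y).const_mul (p.coeff n / (n+1))
    refine h1.congr_deriv ?_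
    have hne : ((n:ℂ)+1) ≠ 0 := Nat.cast_add_one_ne_zero n
    push_cast
    field_simp
  · -- bound
    rw [norm_mul, norm_pow, FormalMultilinearSeries.norm_apply_eq_norm_coef]
    have : ‖y‖ ≤ (r' : ℝ) := le_of_lt (show ‖y‖ < t by simpa using hy)
    gcongr
  · -- t ≠ 0
    intro h0
    exact absurd (h0 ▸ ht1) (by simp [norm_nonneg])

lemma my_exists_log {g : ℂ → ℂ} {ρ : ℝ≥0} (hρ : 0 < ρ)
    (hg : DifferentiableOn ℂ g (Metric.closedBall 0 ρ))
    (hg' : DifferentiableOn ℂ (deriv g) (Metric.closedBall 0 ρ))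
    (hne : ∀ z ∈ Metric.closedBall (0:ℂ) ρ, g z ≠ 0) :
    ∃ L : ℂ → ℂ, L 0 = Complex.log (g 0) ∧
      (∀ z ∈ Metric.ball (0:ℂ) ρ, HasDerivAt L (deriv g z / g z) z) ∧
      ∀ z ∈ Metric.ball (0:ℂ) ρ, g z = Complex.exp (L z) := by
  have hfd : DifferentiableOn ℂ (fun z => deriv g z / g z) (Metric.closedBall 0 ρ) :=
    hg'.div hg hne
  obtain ⟨F, hF0, hF⟩ := my_exists_primitive hρ hfd
  have hsub : Metric.ball (0:ℂ) ρ ⊆ Metric.closedBall 0 ρ := Metric.ball_subset_closedBall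
  have h0mem : (0:ℂ) ∈ Metric.closedBall (0:ℂ) ρ := Metric.mem_closedBall_self (by positivity)
  have hgd : ∀ x ∈ Metric.ball (0:ℂ) ρ, HasDerivAt g (deriv g x) x := by
    intro x hx
    exact (hg.differentiableAt (Filter.mem_of_superset (isOpen_ball.mem_nhds hx) hsub)).hasDerivAt
  have hGconst : ∀ z ∈ Metric.ball (0:ℂ) ρ, g z * Complex.exp (-F z) = g 0 := by
    intro z hz
    have key : ∀ x ∈ Metric.ball (0:ℂ) ρ,
        HasDerivWithinAt (fun w => g w * Complex.exp (-F w)) 0 (Metric.ball (0:ℂ) ρ) x := by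
      intro x hx
      have hd : HasDerivAt (fun w => g w * Complex.exp (-F w))
          (deriv g x * Complex.exp (-F x) +
            g x * (Complex.exp (-F x) * -(deriv g x / g x))) x :=
        (hgd x hx).mul ((hF x hx).neg.cexp)
      have hval : deriv g x * Complex.exp (-F x) +
          g x * (Complex.exp (-F x) * -(deriv g x / g x)) = 0 := by
        have hgx : g x ≠ 0 := hne x (hsub hx)
        field_simp
        ring
      rw [hval] at hd
      exact hd.hasDerivWithinAt
    have := (convex_ball (0:ℂ) ρ).norm_image_sub_le_of_norm_hasDerivWithin_le key
      (C := 0) (fun x _ => by simp) (Metric.mem_ball_self (by exact_mod_cast hρ)) hz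
    have h2 : g z * Complex.exp (-F z) = g 0 * Complex.exp (-F 0) := by
      have h' : ‖g z * Complex.exp (-F z) - g 0 * Complex.exp (-F 0)‖ ≤ 0 := by
        simpa using this
      have := le_antisymm h' (norm_nonneg _)
      rw [norm_eq_zero, sub_eq_zero] at this
      exact this
    rwa [hF0, neg_zero, Complex.exp_zero, mul_one] at h2
  refine ⟨fun z => F z + Complex.log (g 0), by simp [hF0], fun z hz => (hF z hz).add_const _,
    fun z hz => ?_⟩
  have h1 := hGconst z hz
  have h2 : g z = g 0 * Complex.exp (F z) := by
    have he : Complex.exp (-F z) * Complex.exp (F z) = 1 := by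
      rw [← Complex.exp_add]; simp
    calc g z = g z * (Complex.exp (-F z) * Complex.exp (F z)) := by rw [he, mul_one]
    _ = (g z * Complex.exp (-F z)) * Complex.exp (F z) := by ring
    _ = g 0 * Complex.exp (F z) := by rw [h1]
  rw [h2, Complex.exp_add, Complex.exp_log (hne 0 h0mem), mul_comm]
theorem stmt_1 (h : ℂ → ℂ) (lam r : ℝ)
    (hmaps : Set.MapsTo h (Metric.ball 0 1) (Metric.ball 0 1))
    (hdiff : DifferentiableOn ℂ h (Metric.ball 0 1))
    (h0 : h 0 = 0) (hlam : ‖deriv h 0‖ = lam) (hpos : 0 < lam)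
    (hr0 : 0 < r) (hr1 : r < 1)
    (hnot : ∀ z ∈ Metric.ball (0 : ℂ) 1, h z ≠ -(r : ℂ)) :
    ‖deriv (fun ζ : ℂ => (h ζ + (r : ℂ)) / (1 + (r : ℂ) * h ζ)) 0‖
        = (1 - r ^ 2) * lam ∧
    (h 0 + (r : ℂ)) / (1 + (r : ℂ) * h 0) = (r : ℂ) ∧
    lam * r - 2 * Real.sqrt r + lam ≤ 0 := by
  set d := deriv h 0 with hddef
  set G := fun ζ : ℂ => (h ζ + (r : ℂ)) / (1 + (r : ℂ) * h ζ) with hGdef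
  have hmem0 : (0:ℂ) ∈ Metric.ball (0:ℂ) 1 := by simp
  have hhd : DifferentiableAt ℂ h 0 := hdiff.differentiableAt (isOpen_ball.mem_nhds hmem0)
  have hden : ∀ z ∈ Metric.ball (0:ℂ) 1, (1 + (r:ℂ) * h z) ≠ 0 := by
    intro z hz heq
    have hb : ‖h z‖ < 1 := by
      simpa [Metric.mem_ball, Complex.dist_eq] using hmaps hz
    have h1 : (r:ℂ) * h z = -1 := by linear_combination heq
    have h2 : ‖(r:ℂ) * h z‖ = 1 := by rw [h1]; simp
    rw [norm_mul, Complex.norm_of_nonneg hr0.le] at h2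
    nlinarith [norm_nonneg (h z)]
  have hG0 : G 0 = (r:ℂ) := by simp only [hGdef]; simp [h0]
  have hGd : HasDerivAt G ((1 - (r:ℂ)^2) * d) 0 := by
    have hnum : HasDerivAt (fun ζ => h ζ + (r:ℂ)) d 0 := hhd.hasDerivAt.add_const _
    have hdend : HasDerivAt (fun ζ => 1 + (r:ℂ) * h ζ) ((r:ℂ) * d) 0 :=
      (hhd.hasDerivAt.const_mul _).const_add 1
    have hd0 : (1 + (r:ℂ) * h 0) ≠ 0 := by simp [h0]
    have hdiv := hnum.div hdend hd0
    refine hdiv.congr_deriv ?_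
    rw [h0]
    field_simp
    ring
  have habs : ∀ z ∈ Metric.ball (0:ℂ) 1, ‖G z‖ < 1 := by
    intro z hz
    have hb : ‖h z‖ < 1 := by
      simpa [Metric.mem_ball, Complex.dist_eq] using hmaps hz
    have hb2 : Complex.normSq (h z) < 1 := by
      rw [← Complex.sq_norm]; nlinarith [norm_nonneg (h z)]
    have hkey : Complex.normSq (h z + (r:ℂ)) < Complex.normSq (1 + (r:ℂ) * h z) := by
      rw [Complex.normSq_apply] at hb2
      simp only [Complex.normSq_apply, Complex.add_re, Complex.add_im, Complex.one_re,
        Complex.one_im, Complex.mul_re, Complex.mul_im, Complex.ofReal_re, Complex.ofReal_im]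
      nlinarith [hb2, hr0, hr1, mul_pos (show (0:ℝ) < 1 - r^2 by nlinarith)
        (show (0:ℝ) < 1 - ((h z).re*(h z).re + (h z).im*(h z).im) by linarith)]
    simp only [hGdef]
    rw [norm_div, div_lt_one (norm_pos_iff.mpr (hden z hz)), Complex.norm_def,
      Complex.norm_def]
    exact Real.sqrt_lt_sqrt (Complex.normSq_nonneg _) hkey
  have hGdiff : DifferentiableOn ℂ G (Metric.ball 0 1) :=
    DifferentiableOn.div (hdiff.add_const _) ((hdiff.const_mul _).const_add 1) hden
  have hGne : ∀ z ∈ Metric.ball (0:ℂ) 1, G z ≠ 0 := by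
    intro z hz
    refine div_ne_zero ?_ (hden z hz)
    intro h'
    exact hnot z hz (by linear_combination h')
  have hs0 : 0 < Real.sqrt r := Real.sqrt_pos.mpr hr0
  set s := Real.sqrt r with hsdef
  have hs2 : s^2 = r := Real.sq_sqrt hr0.le
  have hs1 : s < 1 := by nlinarith
  refine ⟨?_, by simp [h0], ?_⟩
  · rw [hGd.deriv]
    have hc : (1 - (r:ℂ)^2) = (((1 - r^2 : ℝ)) : ℂ) := by push_cast; ring
    rw [hc, norm_mul, Complex.norm_of_nonneg (by nlinarith), hlam]
  -- main inequality
  have key : ∀ ρ : ℝ≥0, 0 < ρ → (ρ:ℝ) < 1 → (1 + r) * lam / (2*s) ≤ 1 / (ρ:ℝ) := by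
    intro ρ hρ0 hρ1
    have hρ0' : (0:ℝ) < (ρ:ℝ) := by exact_mod_cast hρ0
    have hsub : Metric.closedBall (0:ℂ) ρ ⊆ Metric.ball 0 1 :=
      Metric.closedBall_subset_ball hρ1
    have hsub2 : Metric.ball (0:ℂ) ρ ⊆ Metric.ball 0 1 :=
      Metric.ball_subset_closedBall.trans hsub
    have hder : DifferentiableOn ℂ (deriv G) (Metric.closedBall 0 ρ) :=
      ((hGdiff.analyticOnNhd isOpen_ball).deriv.differentiableOn).mono hsub
    obtain ⟨L, hL0, hLd, hLexp⟩ := my_exists_log hρ0 (hGdiff.mono hsub) hder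
      (fun z hz => hGne z (hsub hz))
    set q := fun z => Complex.exp (L z / 2) with hqdef
    have h0ρ : (0:ℂ) ∈ Metric.ball (0:ℂ) ρ := Metric.mem_ball_self hρ0'
    have hq0 : q 0 = (s:ℂ) := by
      have hL0' : L 0 = ((Real.log r : ℝ) : ℂ) := by
        rw [hL0, hG0, Complex.ofReal_log hr0.le]
      show Complex.exp (L 0 / 2) = (s:ℂ)
      rw [hL0', show ((Real.log r : ℝ):ℂ)/2 = ((Real.log r / 2 : ℝ) : ℂ) by push_cast; ring,
        ← Complex.ofReal_exp]
      norm_cast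
      rw [← Real.log_sqrt hr0.le, Real.exp_log hs0]
    have hqsq : ∀ z, q z ^ 2 = Complex.exp (L z) := by
      intro z
      show Complex.exp (L z / 2) ^ 2 = _
      rw [sq, ← Complex.exp_add]
      congr 1
      ring
    have hqlt : ∀ z ∈ Metric.ball (0:ℂ) ρ, ‖q z‖ < 1 := by
      intro z hz
      have h1 : ‖q z‖^2 = ‖G z‖ := by
        rw [← norm_pow, hqsq, ← hLexp z hz]
      have h2 : ‖G z‖ < 1 := habs z (hsub2 hz)
      nlinarith [norm_nonneg (q z)]
    have hqd : ∀ z ∈ Metric.ball (0:ℂ) ρ, HasDerivAt q (q z * (deriv G z / G z / 2)) z :=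
      fun z hz => ((hLd z hz).div_const 2).cexp
    set ψ := fun z => (q z - (s:ℂ)) / (1 - (s:ℂ) * q z) with hψdef
    have hψden : ∀ z ∈ Metric.ball (0:ℂ) ρ, (1 - (s:ℂ) * q z) ≠ 0 := by
      intro z hz heq
      have h1 : (s:ℂ) * q z = 1 := by linear_combination -heq
      have h2 : ‖(s:ℂ) * q z‖ = 1 := by rw [h1]; simp
      rw [norm_mul, Complex.norm_of_nonneg hs0.le] at h2
      nlinarith [hqlt z hz, norm_nonneg (q z)]
    have hψ0 : ψ 0 = 0 := by
      show (q 0 - (s:ℂ)) / (1 - (s:ℂ) * q 0) = 0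
      rw [hq0, sub_self, zero_div]
    have hψlt : ∀ z ∈ Metric.ball (0:ℂ) ρ, ‖ψ z‖ < 1 := by
      intro z hz
      have hb2 : Complex.normSq (q z) < 1 := by
        have := hqlt z hz
        rw [← Complex.sq_norm]
        nlinarith [norm_nonneg (q z)]
      have hkey : Complex.normSq (q z - (s:ℂ)) < Complex.normSq (1 - (s:ℂ) * q z) := by
        rw [Complex.normSq_apply] at hb2
        simp only [Complex.normSq_apply, Complex.sub_re, Complex.sub_im, Complex.one_re,
          Complex.one_im, Complex.mul_re, Complex.mul_im, Complex.ofReal_re, Complex.ofReal_im]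
        nlinarith [hb2, hs0, hs1]
      show ‖(q z - (s:ℂ)) / (1 - (s:ℂ) * q z)‖ < 1
      rw [norm_div, div_lt_one (norm_pos_iff.mpr (hψden z hz)), Complex.norm_def,
        Complex.norm_def]
      exact Real.sqrt_lt_sqrt (Complex.normSq_nonneg _) hkey
    have hqdiff : DifferentiableOn ℂ q (Metric.ball 0 ρ) := fun z hz =>
      ((hqd z hz).differentiableAt).differentiableWithinAt
    have hψdiff : DifferentiableOn ℂ ψ (Metric.ball 0 ρ) :=
      DifferentiableOn.div (hqdiff.sub_const _) ((hqdiff.const_mul _).const_sub 1) hψden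
    have hmapsψ : Set.MapsTo ψ (Metric.ball (0:ℂ) ρ) (Metric.ball (ψ 0) 1) := by
      intro z hz
      rw [hψ0]
      simpa [Metric.mem_ball, Complex.dist_eq] using hψlt z hz
    have hSch := Complex.norm_deriv_le_div_of_mapsTo_ball hψdiff (hmapsψ.mono_right Metric.ball_subset_closedBall) hρ0'
    have hq'0 := hqd 0 h0ρ
    have hψd : HasDerivAt ψ
        ((q 0 * (deriv G 0 / G 0 / 2) * (1 - (s:ℂ) * q 0) -
          (q 0 - (s:ℂ)) * (-((s:ℂ) * (q 0 * (deriv G 0 / G 0 / 2))))) /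
            (1 - (s:ℂ) * q 0)^2) 0 := by
      have hnum : HasDerivAt (fun z => q z - (s:ℂ)) (q 0 * (deriv G 0 / G 0 / 2)) 0 :=
        hq'0.sub_const _
      have hden2 : HasDerivAt (fun z => 1 - (s:ℂ) * q z)
          (-((s:ℂ) * (q 0 * (deriv G 0 / G 0 / 2)))) 0 := (hq'0.const_mul _).const_sub 1
      exact hnum.div hden2 (hψden 0 h0ρ)
    have hval : (q 0 * (deriv G 0 / G 0 / 2) * (1 - (s:ℂ) * q 0) -
          (q 0 - (s:ℂ)) * (-((s:ℂ) * (q 0 * (deriv G 0 / G 0 / 2))))) /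
            (1 - (s:ℂ) * q 0)^2 = (((1+r)/(2*s) : ℝ) : ℂ) * d := by
      rw [hq0, hGd.deriv, hG0]
      have hsr : (s:ℂ) * (s:ℂ) = (r:ℂ) := by
        have : ((s*s : ℝ) : ℂ) = ((r:ℝ):ℂ) := by rw [show s*s = r by nlinarith]
        push_cast at this
        exact this
      have hrne : (r:ℂ) ≠ 0 := by exact_mod_cast hr0.ne'
      have hsne : (s:ℂ) ≠ 0 := by exact_mod_cast hs0.ne'
      have h1r : (1:ℂ) - (r:ℂ) ≠ 0 := by
        intro hE
        have : (r:ℂ) = 1 := by linear_combination -hE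
        have : r = (1:ℝ) := by exact_mod_cast this
        linarith
      have hden1 : (1:ℂ) - (s:ℂ) * (s:ℂ) ≠ 0 := by rw [hsr]; exact h1r
      have hstep : ((s:ℂ) * ((1 - (r:ℂ)^2) * d / (r:ℂ) / 2) * (1 - (s:ℂ) * (s:ℂ)) -
          ((s:ℂ) - (s:ℂ)) * (-((s:ℂ) * ((s:ℂ) * ((1 - (r:ℂ)^2) * d / (r:ℂ) / 2))))) /
            (1 - (s:ℂ) * (s:ℂ))^2 = (s:ℂ) * (1 + (r:ℂ)) / (2 * (r:ℂ)) * d := by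
        rw [hsr]
        field_simp
        ring
      rw [hstep]
      have hcoe : (s:ℂ) * (1 + (r:ℂ)) / (2 * (r:ℂ)) = (((1+r)/(2*s) : ℝ) : ℂ) := by
        push_cast
        field_simp
        linear_combination (1 + (r:ℂ)) * hsr
      rw [hcoe]
    have habsD : ‖deriv ψ 0‖ = (1+r)*lam/(2*s) := by
      rw [hψd.deriv, hval, norm_mul, Complex.norm_of_nonneg (by positivity), hlam]
      ring
    rw [habsD] at hSch
    exact hSch
  -- take the limit ρ → 1
  have hA0 : 0 < (1 + r) * lam / (2*s) := by positivity
  have hfin : (1 + r) * lam / (2*s) ≤ 1 := by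
    by_contra hc
    push_neg at hc
    set A := (1 + r) * lam / (2*s) with hAdef
    have hA1 : 1/A < 1 := by rw [div_lt_one hA0]; exact hc
    obtain ⟨t, ht1, ht2⟩ := exists_between hA1
    have ht0 : 0 < t := lt_trans (by positivity) ht1
    have := key t.toNNReal (by simpa using ht0) (by simpa [Real.coe_toNNReal t ht0.le] using ht2)
    rw [Real.coe_toNNReal t ht0.le] at this
    have : A ≤ 1/t := this
    have h2 : 1/t < A := by
      rw [div_lt_iff₀ ht0]
      calc 1 = A * (1/A) := by field_simp
      _ < A * t := by exact mul_lt_mul_of_pos_left ht1 hA0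
    linarith
  have h2s : (1+r) * lam ≤ 2*s := by
    rw [div_le_one (by positivity)] at hfin
    exact hfin
  rw [hsdef] at h2s ⊢ -- s def
  linarith
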